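/- Let k ≥ 1 be an integer. The (2,2)-mean ⟨x⟩_{2,2} := ∏_{j=1}^k |x_j|^{x_j² / ∑_{i=1}^k x_i²} (with the conventions 0⁰ := 1 and ⟨0⟩_{2,2} := 0) is Schur²-convex on ℝ^k. -/

import Mathlib

open MeasureTheory ProbabilityTheory Filter
open scoped ENNReal

noncomputable section

/-- The standard Gaussian measure on `ℝ^k` (the `k`-fold product of `N(0,1)`). -/
def stdGaussianPi (k : ℕ) : MeasureTheory.Measure (Fin k → ℝ) :=
  MeasureTheory.Measure.pi fun _ => ProbabilityTheory.gaussianReal 0 1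

/-- `a` majorizes `b`: the total sums agree and, for every `j`, the sum of the `j`
largest entries of `a` is at least the sum of the `j` largest entries of `b`
(formulated equivalently: every sum of entries of `b` over an index set is dominated by
a sum of entries of `a` over an index set of the same cardinality). -/
def Majorizes {k : ℕ} (a b : Fin k → ℝ) : Prop :=
  (∑ i, a i = ∑ i, b i) ∧
  ∀ s : Finset (Fin k), ∃ t : Finset (Fin k),
    t.card = s.card ∧ ∑ i ∈ s, b i ≤ ∑ i ∈ t, a i

/-- The coordinatewise square `x² = (x₁², …, x_k²)` of a vector. -/
def sqv {k : ℕ} (x : Fin k → ℝ) : Fin k → ℝ := fun i => (x i) ^ 2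

/-- `f` is Schur²-concave: `f x ≤ f y` whenever `x²` majorizes `y²`. -/
def Schur2Concave {k : ℕ} {α : Type*} [Preorder α] (f : (Fin k → ℝ) → α) : Prop :=
  ∀ x y : Fin k → ℝ, Majorizes (sqv x) (sqv y) → f x ≤ f y

/-- `f` is Schur²-convex: `f x ≥ f y` whenever `x²` majorizes `y²`. -/
def Schur2Convex {k : ℕ} {α : Type*} [Preorder α] (f : (Fin k → ℝ) → α) : Prop :=
  ∀ x y : Fin k → ℝ, Majorizes (sqv x) (sqv y) → f y ≤ f x

/-- A set `A` is Schur²-convex if `x ∈ A` and `y² ⪯ x²` imply `y ∈ A`. -/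
def Schur2ConvexSet {k : ℕ} (A : Set (Fin k → ℝ)) : Prop :=
  ∀ x y : Fin k → ℝ, x ∈ A → Majorizes (sqv x) (sqv y) → y ∈ A

/-- A set `A` is Schur²-concave if `x ∈ A` and `y² ⪰ x²` imply `y ∈ A`. -/
def Schur2ConcaveSet {k : ℕ} (A : Set (Fin k → ℝ)) : Prop :=
  ∀ x y : Fin k → ℝ, x ∈ A → Majorizes (sqv y) (sqv x) → y ∈ A

open Classical in
/-- The `(2,2)`-mean `⟨x⟩_{2,2} = ∏_j |x_j|^(x_j² / ∑_i x_i²)`, with the conventions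
`0⁰ := 1` (which is `Real.rpow`'s convention) and `⟨0⟩_{2,2} := 0`. -/
noncomputable def mean22 {k : ℕ} (x : Fin k → ℝ) : ℝ :=
  if x = 0 then 0
  else ∏ j, |x j| ^ ((x j) ^ 2 / (∑ i, (x i) ^ 2))

section AuxMajorization
open Finset

/-- Tangent-line inequality for `t * log t` at `b > 0`. -/
lemma mulLog_tangent {a b : ℝ} (ha : 0 ≤ a) (hb : 0 < b) :
    b * Real.log b + (Real.log b + 1) * (a - b) ≤ a * Real.log a := by
  rcases eq_or_lt_of_le ha with h | h
  · subst h; simp; nlinarith [hb.le]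
  · have key : Real.log (b / a) ≤ b / a - 1 := Real.log_le_sub_one_of_pos (by positivity)
    have hlog : Real.log (b / a) = Real.log b - Real.log a := Real.log_div (ne_of_gt hb) (ne_of_gt h)
    rw [hlog] at key
    have := mul_le_mul_of_nonneg_left key (le_of_lt h)
    have ha' : a * (b / a) = b := by field_simp
    nlinarith [this]

/-- Abel-summation style inequality. -/
lemma abel_aux (c d : ℕ → ℝ) :
    ∀ m : ℕ, (∀ i, i + 1 < m → c (i + 1) ≤ c i) →
      (∀ j, j ≤ m → 0 ≤ ∑ i ∈ range j, d i) →
      c (m - 1) * ∑ i ∈ range m, d i ≤ ∑ i ∈ range m, c i * d i := by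
  intro m
  induction m with
  | zero => intro _ _; simp
  | succ n ih =>
    intro hc hD
    rcases Nat.eq_zero_or_pos n with hn | hn
    · subst hn; simp
    · have ihn := ih (fun i hi => hc i (by omega)) (fun j hj => hD j (by omega))
      rw [sum_range_succ, sum_range_succ]
      have hcc : c n ≤ c (n - 1) := by
        have := hc (n - 1) (by omega)
        rwa [Nat.sub_add_cancel hn] at this
      have hDn : 0 ≤ ∑ i ∈ range n, d i := hD n (by omega)
      have hmul : c n * ∑ i ∈ range n, d i ≤ c (n - 1) * ∑ i ∈ range n, d i :=
        mul_le_mul_of_nonneg_right hcc hDn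
      simp only [Nat.add_sub_cancel]
      nlinarith [ihn]

lemma fin_le_strictMono {m : ℕ} (g : Fin m → ℕ) (hg : StrictMono g) :
    ∀ j : Fin m, (j : ℕ) ≤ g j := by
  suffices H : ∀ n, ∀ j : Fin m, (j : ℕ) = n → n ≤ g j by
    intro j; exact H j j rfl
  intro n
  induction n with
  | zero => intro j _; exact Nat.zero_le _
  | succ p ih =>
    intro j hj
    have hp : p < m := by omega
    have hlt : (⟨p, hp⟩ : Fin m) < j := by simp [Fin.lt_def, hj]
    have h1 := hg hlt
    have h2 := ih ⟨p, hp⟩ rfl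
    omega

/-- For an antitone `f : ℕ → ℝ`, any `t.card`-element subset sum is at most the
sum of the first `t.card` values. -/
lemma sum_le_sum_range_card (f : ℕ → ℝ) (hf : Antitone f) (t : Finset ℕ) :
    ∑ i ∈ t, f i ≤ ∑ i ∈ range t.card, f i := by
  set iso := t.orderIsoOfFin (k := t.card) rfl with hiso
  have h1 : ∑ i ∈ t, f i = ∑ j : Fin t.card, f (iso j : ℕ) := by
    rw [← Finset.sum_coe_sort t f]
    exact (Fintype.sum_equiv iso.toEquiv _ _ (fun j => rfl)).symm
  have hsm : StrictMono (fun j : Fin t.card => ((iso j : ℕ))) := fun x y hxy => by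
    exact_mod_cast iso.strictMono hxy
  have h2 : ∀ j : Fin t.card, (j : ℕ) ≤ (iso j : ℕ) := fin_le_strictMono _ hsm
  calc ∑ i ∈ t, f i = ∑ j : Fin t.card, f (iso j : ℕ) := h1
    _ ≤ ∑ j : Fin t.card, f (j : ℕ) := Finset.sum_le_sum fun j _ => hf (h2 j)
    _ = ∑ i ∈ range t.card, f i := (Finset.sum_range fun i => f i).symm

/-- Extend a permuted-sorted vector to `ℕ` by zero. -/
noncomputable def extv {k : ℕ} (a : Fin k → ℝ) (σ : Equiv.Perm (Fin k)) : ℕ → ℝ :=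
  fun n => if h : n < k then a (σ ⟨n, h⟩) else 0

section Core

variable {k : ℕ} (a : Fin k → ℝ)

lemma exists_sorted (ha : ∀ i, 0 ≤ a i) :
    ∃ a' : ℕ → ℝ, Antitone a' ∧ (∀ i, 0 ≤ a' i) ∧ (∀ i, k ≤ i → a' i = 0) ∧
      (∀ g : ℝ → ℝ, g 0 = 0 → ∑ i ∈ Finset.range k, g (a' i) = ∑ i, g (a i)) ∧
      (∀ t : Finset (Fin k), ∑ i ∈ t, a i ≤ ∑ i ∈ Finset.range t.card, a' i) ∧
      (∀ j : ℕ, j ≤ k → ∃ s : Finset (Fin k), s.card = j ∧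
        ∑ i ∈ Finset.range j, a' i = ∑ i ∈ s, a i) := by
  classical
  set σ := Tuple.sort (fun i => -(a i)) with hσ
  have hmono : Monotone ((fun i => -(a i)) ∘ σ) := Tuple.monotone_sort _
  have hanti : Antitone (fun i => a (σ i)) := by
    intro x y hxy
    have := hmono hxy
    simpa using this
  refine ⟨extv a σ, ?_, ?_, ?_, ?_, ?_, ?_⟩
  · -- Antitone
    intro x y hxy
    unfold extv
    by_cases hy : y < k
    · have hx : x < k := lt_of_le_of_lt hxy hy
      rw [dif_pos hx, dif_pos hy]
      exact hanti (show (⟨x, hx⟩ : Fin k) ≤ ⟨y, hy⟩ from hxy)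
    · rw [dif_neg hy]
      by_cases hx : x < k
      · rw [dif_pos hx]; exact ha _
      · rw [dif_neg hx]
  · intro i; unfold extv; split
    · exact ha _
    · exact le_refl 0
  · intro i hi; unfold extv; rw [dif_neg (by omega)]
  · intro g hg
    rw [Finset.sum_range fun i => g (extv a σ i)]
    have : ∀ i : Fin k, g (extv a σ i) = g (a (σ i)) := by
      intro i; unfold extv; rw [dif_pos i.isLt]
    rw [Fintype.sum_congr _ _ this]
    exact Equiv.sum_comp σ (fun i => g (a i))
  · intro t
    have key := sum_le_sum_range_card (extv a σ) ?_ (t.image (fun i => ((σ.symm i : Fin k) : ℕ)))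
    · have hinj : Set.InjOn (fun i : Fin k => ((σ.symm i : Fin k) : ℕ)) t := by
        intro x _ y _ hxy
        exact σ.symm.injective (Fin.val_injective hxy)
      rw [Finset.card_image_of_injOn hinj] at key
      refine le_trans (le_of_eq ?_) key
      rw [Finset.sum_image hinj]
      refine Finset.sum_congr rfl fun i _ => ?_
      unfold extv
      rw [dif_pos (σ.symm i).isLt]
      simp
    · -- antitone again; reuse
      intro x y hxy
      unfold extv
      by_cases hy : y < k
      · have hx : x < k := lt_of_le_of_lt hxy hy
        rw [dif_pos hx, dif_pos hy]
        exact hanti (show (⟨x, hx⟩ : Fin k) ≤ ⟨y, hy⟩ from hxy)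
      · rw [dif_neg hy]
        by_cases hx : x < k
        · rw [dif_pos hx]; exact ha _
        · rw [dif_neg hx]
  · intro j hj
    have hmem : ∀ m ∈ Finset.range j, m < k := fun m hm => lt_of_lt_of_le (Finset.mem_range.mp hm) hj
    refine ⟨((Finset.range j).attachFin hmem).image σ, ?_, ?_⟩
    · rw [Finset.card_image_of_injective _ σ.injective, Finset.card_attachFin]
      exact Finset.card_range j
    · rw [Finset.sum_image (fun x _ y _ h => σ.injective h)]
      refine Finset.sum_bij' (fun (n : ℕ) (hn : n ∈ Finset.range j) => (⟨n, hmem n hn⟩ : Fin k))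
        (fun i _ => (i : ℕ)) ?_ ?_ ?_ ?_ ?_
      · intro n hn; simp [Finset.mem_attachFin]; exact Finset.mem_range.mp hn
      · intro i hi; simp only [Finset.mem_attachFin] at hi; exact hi
      · intro n hn; rfl
      · intro i hi; rfl
      · intro n hn
        unfold extv
        rw [dif_pos (hmem n hn)]

end Core

lemma sum_mulLog_le {k : ℕ} (a b : Fin k → ℝ) (ha : ∀ i, 0 ≤ a i) (hb : ∀ i, 0 ≤ b i)
    (hM : Majorizes a b) :
    ∑ i, b i * Real.log (b i) ≤ ∑ i, a i * Real.log (a i) := by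
  classical
  obtain ⟨a', ha'anti, ha'nn, ha'zero, ha'sum, ha'sub, _⟩ := exists_sorted a ha
  obtain ⟨b', hb'anti, hb'nn, hb'zero, hb'sum, _, hb'part⟩ := exists_sorted b hb
  have sumA : ∑ i ∈ Finset.range k, a' i = ∑ i, a i := by
    simpa using ha'sum id rfl
  have sumB : ∑ i ∈ Finset.range k, b' i = ∑ i, b i := by
    simpa using hb'sum id rfl
  have total : ∑ i ∈ Finset.range k, b' i = ∑ i ∈ Finset.range k, a' i := by
    rw [sumA, sumB, hM.1]
  -- partial sums
  have partial_le : ∀ j : ℕ, ∑ i ∈ Finset.range j, b' i ≤ ∑ i ∈ Finset.range j, a' i := by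
    intro j
    by_cases hj : j ≤ k
    · obtain ⟨s, hs_card, hs_eq⟩ := hb'part j hj
      obtain ⟨t, ht_card, ht⟩ := hM.2 s
      calc ∑ i ∈ Finset.range j, b' i = ∑ i ∈ s, b i := hs_eq
        _ ≤ ∑ i ∈ t, a i := ht
        _ ≤ ∑ i ∈ Finset.range t.card, a' i := ha'sub t
        _ = ∑ i ∈ Finset.range j, a' i := by rw [ht_card, hs_card]
    · push_neg at hj
      have e1 : ∑ i ∈ Finset.range j, b' i = ∑ i ∈ Finset.range k, b' i :=
        (Finset.sum_subset (Finset.range_subset_range.mpr hj.le)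
          (fun x _ hx => hb'zero x (by simp at hx ⊢; omega))).symm
      have e2 : ∑ i ∈ Finset.range j, a' i = ∑ i ∈ Finset.range k, a' i :=
        (Finset.sum_subset (Finset.range_subset_range.mpr hj.le)
          (fun x _ hx => ha'zero x (by simp at hx ⊢; omega))).symm
      rw [e1, e2, total]
  -- the number of nonzero entries of b'
  have hbk : b' k = 0 := hb'zero k le_rfl
  have hex : ∃ n, b' n = 0 := ⟨k, hbk⟩
  set m := Nat.find hex with hm
  have hm_le : m ≤ k := Nat.find_le hbk
  have hb_pos : ∀ i, i < m → 0 < b' i := fun i hi =>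
    lt_of_le_of_ne (hb'nn i) (Ne.symm (Nat.find_min hex hi))
  have hb_zero : ∀ i, m ≤ i → b' i = 0 := fun i hi =>
    le_antisymm (le_trans (hb'anti hi) (le_of_eq (Nat.find_spec hex))) (hb'nn i)
  have Bm : ∑ i ∈ Finset.range m, b' i = ∑ i ∈ Finset.range k, b' i :=
    Finset.sum_subset (Finset.range_subset_range.mpr hm_le)
      (fun x _ hx => hb_zero x (by simp at hx ⊢; omega))
  have Am_le : ∑ i ∈ Finset.range m, a' i ≤ ∑ i ∈ Finset.range k, a' i :=
    Finset.sum_le_sum_of_subset_of_nonneg (Finset.range_subset_range.mpr hm_le)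
      (fun i _ _ => ha'nn i)
  have Am : ∑ i ∈ Finset.range m, a' i = ∑ i ∈ Finset.range k, a' i := by
    have h1 := partial_le m
    rw [Bm, total] at h1
    linarith
  have ha_zero : ∀ i, m ≤ i → a' i = 0 := by
    intro i hi
    by_cases hik : i < k
    · have hsplit : ∑ x ∈ Finset.range m, a' x + ∑ x ∈ Finset.Ico m k, a' x
          = ∑ x ∈ Finset.range k, a' x := Finset.sum_range_add_sum_Ico _ hm_le
      have hzero : ∑ x ∈ Finset.Ico m k, a' x = 0 := by linarith [Am]
      exact (Finset.sum_eq_zero_iff_of_nonneg (fun x _ => ha'nn x)).mp hzero i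
        (Finset.mem_Ico.mpr ⟨hi, hik⟩)
    · exact ha'zero i (by omega)
  -- Abel
  set c : ℕ → ℝ := fun i => Real.log (b' i) + 1 with hc_def
  set d : ℕ → ℝ := fun i => a' i - b' i with hd_def
  have habel : 0 ≤ ∑ i ∈ Finset.range m, c i * d i := by
    have hDm : ∑ i ∈ Finset.range m, d i = 0 := by
      simp only [hd_def, Finset.sum_sub_distrib]
      rw [Am, Bm, total]; ring
    have key := abel_aux c d m
      (fun i hi => by
        have hlog := Real.log_le_log (hb_pos (i + 1) hi) (hb'anti (Nat.le_succ i))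
        simp only [hc_def]; linarith)
      (fun j hj => by
        simp only [hd_def, Finset.sum_sub_distrib]
        linarith [partial_le j])
    rw [hDm, mul_zero] at key
    exact key
  -- tangent line inequality, summed
  have hsum_m : ∑ i ∈ Finset.range m, b' i * Real.log (b' i)
      ≤ ∑ i ∈ Finset.range m, a' i * Real.log (a' i) := by
    have htan : ∑ i ∈ Finset.range m, (b' i * Real.log (b' i) + c i * d i)
        ≤ ∑ i ∈ Finset.range m, a' i * Real.log (a' i) := by
      refine Finset.sum_le_sum fun i hi => ?_
      have := mulLog_tangent (ha'nn i) (hb_pos i (Finset.mem_range.mp hi))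
      simp only [hc_def, hd_def]
      linarith
    rw [Finset.sum_add_distrib] at htan
    linarith
  -- extend to range k and convert back
  have hbig : ∑ i ∈ Finset.range k, b' i * Real.log (b' i)
      ≤ ∑ i ∈ Finset.range k, a' i * Real.log (a' i) := by
    have eb : ∑ i ∈ Finset.range k, b' i * Real.log (b' i)
        = ∑ i ∈ Finset.range m, b' i * Real.log (b' i) :=
      (Finset.sum_subset (Finset.range_subset_range.mpr hm_le)
        (fun x _ hx => by rw [hb_zero x (by simp at hx ⊢; omega)]; simp)).symm
    have ea : ∑ i ∈ Finset.range k, a' i * Real.log (a' i)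
        = ∑ i ∈ Finset.range m, a' i * Real.log (a' i) :=
      (Finset.sum_subset (Finset.range_subset_range.mpr hm_le)
        (fun x _ hx => by rw [ha_zero x (by simp at hx ⊢; omega)]; simp)).symm
    rw [eb, ea]; exact hsum_m
  have ga := ha'sum (fun t => t * Real.log t) (by simp)
  have gb := hb'sum (fun t => t * Real.log t) (by simp)
  rw [ga, gb] at hbig
  exact hbig

end AuxMajorization

section Mean22Proof
open Finset

lemma mean22_eq_exp {k : ℕ} (x : Fin k → ℝ) (hx : x ≠ 0) :
    mean22 x = Real.exp ((∑ j, (x j) ^ 2 * Real.log ((x j) ^ 2)) / (2 * ∑ i, (x i) ^ 2)) := by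
  classical
  have hS : 0 < ∑ i, (x i) ^ 2 := by
    obtain ⟨i, hi⟩ : ∃ i, x i ≠ 0 := by
      by_contra h; push_neg at h; exact hx (funext h)
    exact Finset.sum_pos' (fun j _ => sq_nonneg _) ⟨i, Finset.mem_univ i, by positivity⟩
  have h0 : mean22 x = ∏ j, |x j| ^ ((x j) ^ 2 / ∑ i, (x i) ^ 2) := by
    simp only [mean22]; rw [if_neg hx]
  rw [h0]
  have hfac : ∀ j : Fin k, |x j| ^ ((x j) ^ 2 / ∑ i, (x i) ^ 2)
      = Real.exp ((x j) ^ 2 * Real.log ((x j) ^ 2) / (2 * ∑ i, (x i) ^ 2)) := by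
    intro j
    by_cases hj : x j = 0
    · rw [hj]; simp
    · rw [Real.rpow_def_of_pos (abs_pos.mpr hj)]
      congr 1
      have hlog : Real.log ((x j) ^ 2) = 2 * Real.log |x j| := by
        rw [sq, ← abs_mul_abs_self, Real.log_mul (by positivity) (by positivity)]
        ring
      rw [hlog]
      field_simp
  rw [Finset.prod_congr rfl (fun j _ => hfac j), ← Real.exp_sum]
  congr 1
  rw [← Finset.sum_div]

theorem mean22_schur2Convex' (k : ℕ) :
    Schur2Convex (fun x : Fin k → ℝ => mean22 x) := by
  intro x y hM
  simp only
  by_cases hx : x = 0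
  · have h1 : ∑ i, sqv x i = 0 := by simp [sqv, hx]
    have h3 : ∑ i, sqv y i = 0 := by rw [← hM.1, h1]
    have hy : y = 0 := by
      funext i
      have h4 : sqv y i = 0 :=
        (Finset.sum_eq_zero_iff_of_nonneg (fun i _ => sq_nonneg (y i))).mp h3 i
          (Finset.mem_univ i)
      have : y i ^ 2 = 0 := h4
      exact pow_eq_zero_iff (by norm_num) |>.mp this
    rw [hx, hy]
  · by_cases hy : y = 0
    · have hy0 : mean22 y = 0 := by simp only [mean22]; rw [if_pos hy]
      rw [hy0]
      have hx0 : mean22 x = ∏ j, |x j| ^ ((x j) ^ 2 / ∑ i, (x i) ^ 2) := by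
        simp only [mean22]; rw [if_neg hx]
      rw [hx0]
      exact Finset.prod_nonneg fun j _ => Real.rpow_nonneg (abs_nonneg _) _
    · have hSxy : ∑ i, (x i) ^ 2 = ∑ i, (y i) ^ 2 := hM.1
      have hS : 0 < ∑ i, (x i) ^ 2 := by
        obtain ⟨i, hi⟩ : ∃ i, x i ≠ 0 := by
          by_contra h; push_neg at h; exact hx (funext h)
        exact Finset.sum_pos' (fun j _ => sq_nonneg _) ⟨i, Finset.mem_univ i, by positivity⟩
      rw [mean22_eq_exp x hx, mean22_eq_exp y hy, Real.exp_le_exp, ← hSxy]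
      have hcore := sum_mulLog_le (sqv x) (sqv y) (fun i => sq_nonneg _)
        (fun i => sq_nonneg _) hM
      have hcore' : ∑ j, (y j) ^ 2 * Real.log ((y j) ^ 2)
          ≤ ∑ j, (x j) ^ 2 * Real.log ((x j) ^ 2) := hcore
      gcongr

end Mean22Proof

/-- The `(2,2)`-mean is Schur²-convex on `ℝ^k`. -/
theorem mean22_schur2Convex (k : ℕ) (hk : 1 ≤ k) :
    Schur2Convex (fun x : Fin k → ℝ => mean22 x) :=
  mean22_schur2Convex' k
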